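/- Let X be a finite simple graph on m ≥ 3 vertices, let g be a positive divisor of m, and suppose X admits proper Laplacian fractional revival between vertices a and b at time 2π/g. Let Y be any finite simple graph on n vertices with g dividing n. Then the join X + Y admits proper Laplacian fractional revival between a and b at time 2π/g. -/

import Mathlib

open Matrix

noncomputable def lapR {V : Type*} [Fintype V] [DecidableEq V] (G : SimpleGraph V) :
    Matrix V V ℝ :=
  letI := Classical.decRel G.Adj
  G.lapMatrix ℝ

noncomputable def lapC {V : Type*} [Fintype V] [DecidableEq V] (G : SimpleGraph V) :
    Matrix V V ℂ :=
  (lapR G).map Complex.ofReal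

noncomputable def transition {V : Type*} [Fintype V] [DecidableEq V] (G : SimpleGraph V)
    (t : ℝ) : Matrix V V ℂ :=
  NormedSpace.exp ((Complex.I * (t : ℂ)) • lapC G)

/-- proper Laplacian fractional revival between distinct vertices `a, b` at time `τ`. -/
def properLaFR {V : Type*} [Fintype V] [DecidableEq V] (G : SimpleGraph V) (a b : V)
    (τ : ℝ) : Prop :=
  a ≠ b ∧ ∃ α β : ℂ, β ≠ 0 ∧
    transition G τ *ᵥ Pi.single a 1 =
      α • (Pi.single a 1 : V → ℂ) + β • (Pi.single b 1 : V → ℂ)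

/-- Laplacian periodicity at vertex `a` at time `τ`. -/
def periodicAt {V : Type*} [Fintype V] [DecidableEq V] (G : SimpleGraph V) (a : V)
    (τ : ℝ) : Prop :=
  ∃ α : ℂ, transition G τ *ᵥ Pi.single a 1 = α • (Pi.single a 1 : V → ℂ)

/-- The matrix of the orthogonal projection onto the `μ`-eigenspace of the Laplacian. -/
noncomputable def eigProj {V : Type*} [Fintype V] [DecidableEq V] (G : SimpleGraph V)
    (μ : ℝ) : Matrix V V ℝ :=
  Matrix.toEuclideanLin.symm
    ((Module.End.eigenspace (Matrix.toEuclideanLin (lapR G)) μ).subtype ∘ₗ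
      (Submodule.orthogonalProjectionOnto
        (Module.End.eigenspace (Matrix.toEuclideanLin (lapR G)) μ) :
          EuclideanSpace ℝ V →L[ℝ] _).toLinearMap)

def StronglyCospectral {V : Type*} [Fintype V] [DecidableEq V] (G : SimpleGraph V)
    (a b : V) : Prop :=
  ∀ μ : ℝ, eigProj G μ *ᵥ Pi.single a 1 = eigProj G μ *ᵥ Pi.single b 1 ∨
    eigProj G μ *ᵥ Pi.single a 1 = -(eigProj G μ *ᵥ Pi.single b 1)

def PhiPlus {V : Type*} [Fintype V] [DecidableEq V] (G : SimpleGraph V) (a b : V) :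
    Set ℝ :=
  {μ | eigProj G μ *ᵥ Pi.single a 1 = eigProj G μ *ᵥ Pi.single b 1 ∧
    eigProj G μ *ᵥ Pi.single a 1 ≠ 0}

def PhiMinus {V : Type*} [Fintype V] [DecidableEq V] (G : SimpleGraph V) (a b : V) :
    Set ℝ :=
  {μ | eigProj G μ *ᵥ Pi.single a 1 = -(eigProj G μ *ᵥ Pi.single b 1) ∧
    eigProj G μ *ᵥ Pi.single a 1 ≠ 0}

def eigSupport {V : Type*} [Fintype V] [DecidableEq V] (G : SimpleGraph V) (a : V) :
    Set ℝ :=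
  {μ | eigProj G μ *ᵥ Pi.single a 1 ≠ 0}

/-- `r` is an integer multiple of the natural number `g`. -/
def intDvd (g : ℕ) (r : ℝ) : Prop := ∃ k : ℤ, r = (g : ℝ) * k

/-- The join of two simple graphs. -/
def graphJoin {V W : Type*} (G : SimpleGraph V) (H : SimpleGraph W) :
    SimpleGraph (V ⊕ W) where
  Adj x y :=
    match x, y with
    | Sum.inl a, Sum.inl b => G.Adj a b
    | Sum.inl _, Sum.inr _ => True
    | Sum.inr _, Sum.inl _ => True
    | Sum.inr a, Sum.inr b => H.Adj a b
  symm := by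
    constructor
    rintro (a | a) (b | b) h
    · exact G.adj_symm h
    · trivial
    · trivial
    · exact H.adj_symm h
  loopless := by
    constructor
    rintro (a | a) h
    · exact G.loopless.irrefl a h
    · exact H.loopless.irrefl a h


section AuxExp

variable {ι κ : Type*} [Fintype ι] [DecidableEq ι] [Fintype κ] [DecidableEq κ]

noncomputable def mulVecL (w : ι → ℂ) : Matrix ι ι ℂ →ₗ[ℂ] (ι → ℂ) where
  toFun M := M *ᵥ w
  map_add' A B := Matrix.add_mulVec A B w
  map_smul' c A := by simp [Matrix.smul_mulVec]

lemma exp_mulVec_tsum (M : Matrix ι ι ℂ) (w : ι → ℂ) :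
    NormedSpace.exp M *ᵥ w = ∑' (k : ℕ), (k.factorial : ℂ)⁻¹ • (M ^ k *ᵥ w) := by
  letI : SeminormedRing (Matrix ι ι ℂ) := Matrix.linftyOpSemiNormedRing
  letI : NormedRing (Matrix ι ι ℂ) := Matrix.linftyOpNormedRing
  letI : NormedAlgebra ℂ (Matrix ι ι ℂ) := Matrix.linftyOpNormedAlgebra
  have hs : Summable fun k : ℕ => (k.factorial : ℂ)⁻¹ • M ^ k := by
    exact NormedSpace.expSeries_summable' (𝕂 := ℂ) M
  have h1 : NormedSpace.exp M = ∑' (k : ℕ), (k.factorial : ℂ)⁻¹ • M ^ k := by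
    rw [NormedSpace.exp_eq_tsum ℂ]
  rw [h1]
  have h2 := ContinuousLinearMap.map_tsum
    (LinearMap.toContinuousLinearMap (mulVecL (ι := ι) w)) hs
  simpa [mulVecL, Matrix.smul_mulVec] using h2

lemma summable_exp_mulVec (M : Matrix ι ι ℂ) (w : ι → ℂ) :
    Summable fun k : ℕ => (k.factorial : ℂ)⁻¹ • (M ^ k *ᵥ w) := by
  letI : SeminormedRing (Matrix ι ι ℂ) := Matrix.linftyOpSemiNormedRing
  letI : NormedRing (Matrix ι ι ℂ) := Matrix.linftyOpNormedRing
  letI : NormedAlgebra ℂ (Matrix ι ι ℂ) := Matrix.linftyOpNormedAlgebra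
  have hs : Summable fun k : ℕ => (k.factorial : ℂ)⁻¹ • M ^ k := by
    exact NormedSpace.expSeries_summable' (𝕂 := ℂ) M
  have := hs.map (mulVecL (ι := ι) w).toAddMonoidHom
    (LinearMap.continuous_of_finiteDimensional _)
  simpa [mulVecL, Function.comp_def, Matrix.smul_mulVec] using this

lemma exp_mulVec_of_orbit (M : Matrix ι ι ℂ) (M' : Matrix κ κ ℂ)
    (f : (ι → ℂ) →ₗ[ℂ] (κ → ℂ)) (x : ι → ℂ)
    (h : ∀ k : ℕ, M' ^ k *ᵥ f x = f (M ^ k *ᵥ x)) :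
    NormedSpace.exp M' *ᵥ f x = f (NormedSpace.exp M *ᵥ x) := by
  rw [exp_mulVec_tsum, exp_mulVec_tsum]
  have hmap := ContinuousLinearMap.map_tsum
    (LinearMap.toContinuousLinearMap f) (summable_exp_mulVec M x)
  simp only [LinearMap.coe_toContinuousLinearMap'] at hmap
  rw [hmap]
  exact tsum_congr fun k => by rw [h, _root_.map_smul]

lemma exp_mulVec_eig (M : Matrix ι ι ℂ) (x : ι → ℂ) (μ : ℂ) (h : M *ᵥ x = μ • x) :
    NormedSpace.exp M *ᵥ x = Complex.exp μ • x := by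
  have hk : ∀ k : ℕ, M ^ k *ᵥ x = μ ^ k • x := by
    intro k
    induction k with
    | zero => simp
    | succ k ih =>
      rw [pow_succ, ← Matrix.mulVec_mulVec, h, Matrix.mulVec_smul, ih, smul_smul,
        pow_succ, mul_comm]
  have hsum : Summable fun k : ℕ => (k.factorial : ℂ)⁻¹ * μ ^ k := by
    simpa [smul_eq_mul] using NormedSpace.expSeries_summable' (𝕂 := ℂ) μ
  rw [exp_mulVec_tsum]
  simp_rw [hk, smul_smul]
  rw [hsum.tsum_smul_const]
  congr 1
  rw [Complex.exp_eq_exp_ℂ, NormedSpace.exp_eq_tsum ℂ]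
  simp [smul_eq_mul]

end AuxExp

section AuxLap

lemma lapC_eq {ι : Type*} [Fintype ι] [DecidableEq ι] (G : SimpleGraph ι)
    [DecidableRel G.Adj] : lapC G = G.lapMatrix ℂ := by
  have hR : lapR G = G.lapMatrix ℝ := by
    unfold lapR
    congr!
  rw [lapC, hR]
  ext i j
  simp only [SimpleGraph.lapMatrix, SimpleGraph.degMatrix, SimpleGraph.adjMatrix,
    Matrix.map_apply, Matrix.sub_apply, Matrix.diagonal_apply, Matrix.of_apply]
  push_cast [apply_ite (Complex.ofReal)]
  rfl

lemma lapC_mulVec_apply {ι : Type*} [Fintype ι] [DecidableEq ι] (G : SimpleGraph ι)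
    [DecidableRel G.Adj] (z : ι → ℂ) (i : ι) :
    (lapC G *ᵥ z) i = (G.degree i : ℂ) * z i - ∑ u ∈ G.neighborFinset i, z u := by
  rw [lapC_eq, SimpleGraph.lapMatrix_mulVec_apply]

open Classical in
lemma lapC_mulVec_one {ι : Type*} [Fintype ι] [DecidableEq ι] (G : SimpleGraph ι) :
    lapC G *ᵥ (fun _ => (1 : ℂ)) = 0 := by
  ext i
  rw [lapC_mulVec_apply]
  simp [SimpleGraph.card_neighborFinset_eq_degree]

open Classical in
lemma sum_lapC_mulVec {ι : Type*} [Fintype ι] [DecidableEq ι] (G : SimpleGraph ι)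
    (y : ι → ℂ) : ∑ v, (lapC G *ᵥ y) v = 0 := by
  have hsym : (lapC G)ᵀ = lapC G := by
    rw [lapC_eq]
    exact G.isSymm_lapMatrix (R := ℂ)
  have h1 : ∀ u, ∑ v, lapC G v u = 0 := by
    intro u
    have := congrFun (lapC_mulVec_one G) u
    simp only [Matrix.mulVec, dotProduct, mul_one, Pi.zero_apply] at this
    calc ∑ v, lapC G v u = ∑ v, lapC G u v := by
          refine Finset.sum_congr rfl fun v _ => ?_
          conv_lhs => rw [← hsym]
          rfl
      _ = 0 := this
  calc ∑ v, (lapC G *ᵥ y) v = ∑ v, ∑ u, lapC G v u * y u := rfl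
    _ = ∑ u, (∑ v, lapC G v u) * y u := by
        rw [Finset.sum_comm]
        simp [Finset.sum_mul]
    _ = 0 := by simp [h1]

end AuxLap

section AuxJoin

variable {V W : Type*} [Fintype V] [DecidableEq V] [Fintype W] [DecidableEq W]
  (X : SimpleGraph V) (Y : SimpleGraph W)

open Classical in
omit [DecidableEq V] [DecidableEq W] in
lemma join_sum_neighbor_inl {M : Type*} [AddCommMonoid M] (f : V ⊕ W → M) (v : V) :
    ∑ j ∈ (graphJoin X Y).neighborFinset (Sum.inl v), f j =
      (∑ u ∈ X.neighborFinset v, f (Sum.inl u)) + ∑ w : W, f (Sum.inr w) := by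
  rw [SimpleGraph.neighborFinset_eq_filter, SimpleGraph.neighborFinset_eq_filter,
    Finset.sum_filter, Finset.sum_filter, Fintype.sum_sum_type]
  congr 1
  all_goals first
    | exact Finset.sum_congr rfl fun u _ => if_pos trivial
    | exact Finset.sum_congr rfl fun u _ => if_congr Iff.rfl rfl rfl

open Classical in
omit [DecidableEq V] [DecidableEq W] in
lemma join_sum_neighbor_inr {M : Type*} [AddCommMonoid M] (f : V ⊕ W → M) (w : W) :
    ∑ j ∈ (graphJoin X Y).neighborFinset (Sum.inr w), f j =
      (∑ v : V, f (Sum.inl v)) + ∑ u ∈ Y.neighborFinset w, f (Sum.inr u) := by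
  rw [SimpleGraph.neighborFinset_eq_filter, SimpleGraph.neighborFinset_eq_filter,
    Finset.sum_filter, Finset.sum_filter, Fintype.sum_sum_type]
  congr 1
  all_goals first
    | exact Finset.sum_congr rfl fun u _ => if_pos trivial
    | exact Finset.sum_congr rfl fun u _ => if_congr Iff.rfl rfl rfl

open Classical in
omit [DecidableEq V] [DecidableEq W] in
lemma join_degree_inl (v : V) :
    (graphJoin X Y).degree (Sum.inl v) = X.degree v + Fintype.card W := by
  have h := join_sum_neighbor_inl X Y (fun _ => (1 : ℕ)) v
  simp only [Finset.sum_const, smul_eq_mul, mul_one] at h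
  exact h

open Classical in
omit [DecidableEq V] [DecidableEq W] in
lemma join_degree_inr (w : W) :
    (graphJoin X Y).degree (Sum.inr w) = Y.degree w + Fintype.card V := by
  have h := join_sum_neighbor_inr X Y (fun _ => (1 : ℕ)) w
  simp only [Finset.sum_const, smul_eq_mul, mul_one] at h
  rw [add_comm] at h
  exact h

open Classical in
lemma lapC_join_inl (y : V → ℂ) (v : V) :
    (lapC (graphJoin X Y) *ᵥ Sum.elim y 0) (Sum.inl v) =
      (lapC X *ᵥ y) v + (Fintype.card W : ℂ) * y v := by
  rw [lapC_mulVec_apply, lapC_mulVec_apply, join_sum_neighbor_inl, join_degree_inl]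
  simp only [Sum.elim_inl, Sum.elim_inr, Pi.zero_apply, Finset.sum_const, smul_zero,
    Finset.sum_const_zero, add_zero]
  push_cast
  ring

open Classical in
lemma lapC_join_inr (y : V → ℂ) (hy : ∑ v, y v = 0) (w : W) :
    (lapC (graphJoin X Y) *ᵥ Sum.elim y 0) (Sum.inr w) = 0 := by
  rw [lapC_mulVec_apply, join_sum_neighbor_inr]
  simp [hy]

open Classical in
lemma lapC_join_u1 :
    lapC (graphJoin X Y) *ᵥ
        Sum.elim (fun _ => (Fintype.card W : ℂ)) (fun _ => -(Fintype.card V : ℂ)) =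
      ((Fintype.card V + Fintype.card W : ℕ) : ℂ) •
        Sum.elim (fun _ => (Fintype.card W : ℂ)) (fun _ => -(Fintype.card V : ℂ)) := by
  ext j
  cases j with
  | inl v =>
    rw [Matrix.mulVec, Pi.smul_apply]
    show (lapC (graphJoin X Y) *ᵥ _) (Sum.inl v) = _
    rw [lapC_mulVec_apply, join_sum_neighbor_inl, join_degree_inl]
    have hd : (X.neighborFinset v).card = X.degree v :=
      SimpleGraph.card_neighborFinset_eq_degree X v
    simp only [Sum.elim_inl, Sum.elim_inr, Finset.sum_const, Finset.card_univ,
      nsmul_eq_mul, smul_eq_mul, hd]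
    push_cast
    ring
  | inr w =>
    rw [Matrix.mulVec, Pi.smul_apply]
    show (lapC (graphJoin X Y) *ᵥ _) (Sum.inr w) = _
    rw [lapC_mulVec_apply, join_sum_neighbor_inr, join_degree_inr]
    have hd : (Y.neighborFinset w).card = Y.degree w :=
      SimpleGraph.card_neighborFinset_eq_degree Y w
    simp only [Sum.elim_inl, Sum.elim_inr, Finset.sum_const, Finset.card_univ,
      nsmul_eq_mul, smul_eq_mul, hd]
    push_cast
    ring

/-- the embedding of functions on `V` into functions on `V ⊕ W`. -/
noncomputable def embL : (V → ℂ) →ₗ[ℂ] (V ⊕ W → ℂ) where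
  toFun x := Sum.elim x 0
  map_add' x y := by
    ext j
    cases j <;> simp
  map_smul' c x := by
    ext j
    cases j <;> simp

end AuxJoin

lemma exp_lapC_ones {ι : Type*} [Fintype ι] [DecidableEq ι] (G : SimpleGraph ι)
    (c : ℂ) :
    NormedSpace.exp (c • lapC G) *ᵥ (fun _ => (1 : ℂ)) = fun _ => (1 : ℂ) := by
  have heig : (c • lapC G) *ᵥ (fun _ => (1 : ℂ)) = (0 : ℂ) • (fun _ => (1 : ℂ)) := by
    rw [Matrix.smul_mulVec, lapC_mulVec_one]
    simp
  rw [exp_mulVec_eig _ _ 0 heig]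
  simp

lemma exp_two_pi_div_mul_of_dvd (g n : ℕ) (hg : 0 < g) (hdvd : g ∣ n) :
    Complex.exp (Complex.I * ((2 * Real.pi / (g : ℝ) : ℝ) : ℂ) * (n : ℂ)) = 1 := by
  obtain ⟨k, rfl⟩ := hdvd
  have hg0 : (g : ℝ) ≠ 0 := Nat.cast_ne_zero.mpr hg.ne'
  have hgC : (g : ℂ) ≠ 0 := Nat.cast_ne_zero.mpr hg.ne'
  have harg : Complex.I * ((2 * Real.pi / (g : ℝ) : ℝ) : ℂ) * ((g * k : ℕ) : ℂ)
      = ((k : ℤ) : ℂ) * (2 * (Real.pi : ℂ) * Complex.I) := by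
    push_cast
    field_simp
  rw [harg]
  exact Complex.exp_int_mul_two_pi_mul_I k

/-- If `X` on `m ≥ 3` vertices has proper LaFR between `a`
and `b` at time `2π/g` with `g ∣ m`, and `g` divides the number of vertices of
`Y`, then the join `X + Y` has proper LaFR between `a` and `b` at `2π/g`. -/
theorem join_properLaFR {V W : Type*} [Fintype V] [DecidableEq V]
    [Fintype W] [DecidableEq W]
    (X : SimpleGraph V) (Y : SimpleGraph W) (m n g : ℕ)
    (hm : Fintype.card V = m) (h3 : 3 ≤ m) (hg : 0 < g) (hgm : g ∣ m)
    (hn : Fintype.card W = n) (hgn : g ∣ n)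
    (a b : V) (h : properLaFR X a b (2 * Real.pi / (g : ℝ))) :
    properLaFR (graphJoin X Y) (Sum.inl a) (Sum.inl b) (2 * Real.pi / (g : ℝ)) := by
  classical
  subst hm
  subst hn
  obtain ⟨hab, α, β, hβ, heq⟩ := h
  set m := Fintype.card V with hm
  set n := Fintype.card W with hn
  set τ : ℝ := 2 * Real.pi / (g : ℝ) with hτ
  set c : ℂ := Complex.I * (τ : ℂ) with hc
  have hm0 : (m : ℂ) ≠ 0 := by
    have : 0 < m := lt_of_lt_of_le (by norm_num) h3
    exact_mod_cast this.ne'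
  have hN0 : ((m + n : ℕ) : ℂ) ≠ 0 := by
    have : 0 < m + n := lt_of_lt_of_le (by omega) (Nat.le_add_right _ _)
    exact_mod_cast this.ne'
  have hexp_n : Complex.exp (c * (n : ℂ)) = 1 := by
    rw [hc]
    exact exp_two_pi_div_mul_of_dvd g n hg hgn
  have hexp_N : Complex.exp (c * ((m + n : ℕ) : ℂ)) = 1 := by
    rw [hc]
    exact exp_two_pi_div_mul_of_dvd g (m + n) hg (Nat.dvd_add hgm hgn)
  -- notation
  set J := graphJoin X Y with hJ
  set u1 : V ⊕ W → ℂ := Sum.elim (fun _ => (n : ℂ)) (fun _ => -(m : ℂ)) with hu1def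
  set x : V → ℂ := Pi.single a 1 - (m : ℂ)⁻¹ • (fun _ => (1 : ℂ)) with hx
  set S' : Matrix V V ℂ := c • lapC X + (c * (n : ℂ)) • (1 : Matrix V V ℂ) with hS'
  have hxsum : ∑ v, x v = 0 := by
    rw [hx]
    simp only [Pi.sub_apply, Pi.smul_apply, smul_eq_mul, mul_one,
      Finset.sum_sub_distrib, Finset.sum_const, Finset.card_univ]
    rw [Finset.sum_pi_single']
    simp [← hm, hm0]
  -- single step
  have hstep : ∀ y : V → ℂ, (∑ v, y v = 0) →
      ((c • lapC J) *ᵥ embL y = embL (S' *ᵥ y) ∧ ∑ v, (S' *ᵥ y) v = 0) := by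
    intro y hy
    constructor
    · ext j
      cases j with
      | inl v =>
        show ((c • lapC J) *ᵥ Sum.elim y 0) (Sum.inl v) = (S' *ᵥ y) v
        rw [Matrix.smul_mulVec, Pi.smul_apply, lapC_join_inl, hS',
          Matrix.add_mulVec, Pi.add_apply, Matrix.smul_mulVec,
          Matrix.smul_mulVec, Matrix.one_mulVec]
        simp only [Pi.smul_apply, smul_eq_mul, ← hn]
        ring
      | inr w =>
        show ((c • lapC J) *ᵥ Sum.elim y 0) (Sum.inr w) = (0 : ℂ)
        rw [Matrix.smul_mulVec, Pi.smul_apply, lapC_join_inr X Y y hy w]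
        simp
    · rw [hS', Matrix.add_mulVec, Matrix.smul_mulVec, Matrix.smul_mulVec,
        Matrix.one_mulVec]
      simp only [Pi.add_apply, Pi.smul_apply, smul_eq_mul, Finset.sum_add_distrib,
        ← Finset.mul_sum]
      rw [sum_lapC_mulVec, hy]
      simp
  -- orbit
  have horbit : ∀ (k : ℕ) (y : V → ℂ), (∑ v, y v = 0) →
      ((c • lapC J) ^ k *ᵥ embL y = embL (S' ^ k *ᵥ y) ∧ ∑ v, (S' ^ k *ᵥ y) v = 0) := by
    intro k
    induction k with
    | zero => intro y hy; simpa using hy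
    | succ k ih =>
      intro y hy
      obtain ⟨ih1, ih2⟩ := ih y hy
      obtain ⟨hs1, hs2⟩ := hstep _ ih2
      constructor
      · rw [pow_succ', ← Matrix.mulVec_mulVec, ih1, hs1, Matrix.mulVec_mulVec,
          ← pow_succ']
      · rw [Matrix.mulVec_mulVec, ← pow_succ'] at hs2
        exact hs2
  -- exp of S'
  have hExpS' : ∀ y : V → ℂ,
      NormedSpace.exp S' *ᵥ y = NormedSpace.exp (c • lapC X) *ᵥ y := by
    intro y
    have hcomm : Commute (c • lapC X) ((c * (n : ℂ)) • (1 : Matrix V V ℂ)) := by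
      unfold Commute SemiconjBy
      simp [Matrix.mul_smul, Matrix.smul_mul, smul_smul, mul_comm, mul_left_comm]
    rw [hS', Matrix.exp_add_of_commute _ _ hcomm, ← Matrix.mulVec_mulVec]
    have heig : NormedSpace.exp ((c * (n : ℂ)) • (1 : Matrix V V ℂ)) *ᵥ y
        = Complex.exp (c * (n : ℂ)) • y := by
      apply exp_mulVec_eig
      rw [Matrix.smul_mulVec, Matrix.one_mulVec]
    rw [heig, hexp_n, one_smul]
  -- all-ones and u1 are fixed
  have hu1fix : NormedSpace.exp (c • lapC J) *ᵥ u1 = u1 := by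
    have heig : (c • lapC J) *ᵥ u1 = (c * ((m + n : ℕ) : ℂ)) • u1 := by
      rw [Matrix.smul_mulVec, hu1def, hJ, lapC_join_u1, ← hm, ← hn, smul_smul]
    rw [exp_mulVec_eig _ _ _ heig, hexp_N, one_smul]
  -- embL of all-ones is fixed
  have honesV : (embL (fun _ => (1 : ℂ)) : V ⊕ W → ℂ)
      = (((m + n : ℕ) : ℂ))⁻¹ • ((m : ℂ) • (fun _ => (1 : ℂ)) + u1) := by
    ext j
    cases j with
    | inl v =>
      show (1 : ℂ) = ((m + n : ℕ) : ℂ)⁻¹ * ((m : ℂ) * 1 + (n : ℂ))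
      have hN0' : (m : ℂ) + (n : ℂ) ≠ 0 := by exact_mod_cast hN0
      push_cast
      field_simp
    | inr w =>
      show (0 : ℂ) = ((m + n : ℕ) : ℂ)⁻¹ * ((m : ℂ) * 1 + -(m : ℂ))
      simp
  have hfix1 : NormedSpace.exp (c • lapC J) *ᵥ embL (fun _ => (1 : ℂ))
      = embL (fun _ => (1 : ℂ)) := by
    rw [honesV, Matrix.mulVec_smul, Matrix.mulVec_add, Matrix.mulVec_smul,
      exp_lapC_ones J c, hu1fix]
  -- decomposition of the standard basis vector
  have hembsingle : ∀ t : V,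
      (embL (Pi.single t 1) : V ⊕ W → ℂ) = Pi.single (Sum.inl t) 1 := by
    intro t
    ext j
    cases j with
    | inl v =>
      show (Pi.single t 1 : V → ℂ) v = _
      simp [Pi.single_apply]
    | inr w =>
      show (0 : ℂ) = _
      simp [Pi.single_apply]
  have hdecomp : (Pi.single (Sum.inl a) 1 : V ⊕ W → ℂ)
      = embL x + (m : ℂ)⁻¹ • embL (fun _ => (1 : ℂ)) := by
    rw [hx, map_sub, _root_.map_smul]
    rw [hembsingle a]
    abel
  -- main computation
  refine ⟨fun hh => hab (Sum.inl.inj hh), α, β, hβ, ?_⟩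
  show NormedSpace.exp (c • lapC J) *ᵥ (Pi.single (Sum.inl a) 1 : V ⊕ W → ℂ) = _
  conv_lhs => rw [hdecomp]
  rw [Matrix.mulVec_add, Matrix.mulVec_smul, hfix1]
  have horb := exp_mulVec_of_orbit S' (c • lapC J) embL x
    (fun k => (horbit k x hxsum).1)
  rw [horb, hExpS']
  have hXe : NormedSpace.exp (c • lapC X) *ᵥ x
      = α • (Pi.single a 1 : V → ℂ) + β • (Pi.single b 1 : V → ℂ)
        - (m : ℂ)⁻¹ • (fun _ => (1 : ℂ)) := by
    rw [hx, Matrix.mulVec_sub, Matrix.mulVec_smul, exp_lapC_ones X c]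
    have : NormedSpace.exp (c • lapC X) *ᵥ (Pi.single a 1 : V → ℂ)
        = α • (Pi.single a 1 : V → ℂ) + β • (Pi.single b 1 : V → ℂ) := heq
    rw [this]
  rw [hXe]
  have expand : embL (V := V) (W := W)
        (α • (Pi.single a 1 : V → ℂ) + β • (Pi.single b 1 : V → ℂ)
          - (m : ℂ)⁻¹ • (fun _ => (1 : ℂ)))
      = α • (Pi.single (Sum.inl a) 1 : V ⊕ W → ℂ)
        + β • (Pi.single (Sum.inl b) 1 : V ⊕ W → ℂ)
        - (m : ℂ)⁻¹ • embL (V := V) (W := W) (fun _ => (1 : ℂ)) := by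
    rw [map_sub, map_add, _root_.map_smul, _root_.map_smul, _root_.map_smul,
      hembsingle a, hembsingle b]
  rw [expand]
  abel
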